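/- Let N' ≥ 1, let p_1,...,p_{N'} be reals with 0 ≤ p_1 ≤ ... ≤ p_{N'}, let L ≥ 0, and let k ≥ 2 and l ≥ 0 be reals. Define q_j = min(p_j, L) and r_j = k·p_j + l·q_j. Then max over (σ_1,...,σ_{N'}) ∈ {−1,1}^{N'} of [Σ_{j=1}^{N'} σ_j·(k·p_j + (l−1)·q_j) − Σ_{1≤j<j'≤N'} σ_j·σ_{j'}·r_j] equals max( max over σ ∈ {−1,1}^{N'} of [Σ_{j=1}^{N'} σ_j·((k−2)·p_j + (l+1)·q_j) − Σ_{1≤j<j'≤N'} σ_j·σ_{j'}·r_j], max over σ ∈ {−1,1}^{N'} of [Σ_{j=1}^{N'} σ_j·(k·p_j + (l+1)·q_j) − Σ_{1≤j<j'≤N'} σ_j·σ_{j'}·r_j] − 2L ). -/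

import Mathlib

open Finset

noncomputable def sg (σ : ℕ → Bool) (j : ℕ) : ℝ := if σ j then 1 else -1

noncomputable def G (a r : ℕ → ℝ) (σ : ℕ → Bool) (t : ℤ) (m : ℕ) : ℝ :=
  (∑ j ∈ Finset.range m, sg σ j * a j)
    - (∑ j ∈ Finset.range m, ∑ j' ∈ Finset.range m,
        if j < j' then sg σ j * sg σ j' * r j else 0)
    - (t : ℝ) * ∑ j ∈ Finset.range m, sg σ j * r j

noncomputable def B (a r : ℕ → ℝ) (θ : ℤ) : ℕ → ℤ → ℝ
  | 0, _ => 0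
  | (m+1), t => if t ≤ θ then a m - (t:ℝ) * r m + B a r θ m (t+1)
                else (t:ℝ) * r m - a m + B a r θ m (t-1)

lemma G_zero (a r : ℕ → ℝ) (σ : ℕ → Bool) (t : ℤ) : G a r σ t 0 = 0 := by simp [G]

lemma G_congr (a r : ℕ → ℝ) (σ σ' : ℕ → Bool) (t : ℤ) (m : ℕ)
    (h : ∀ j < m, σ j = σ' j) : G a r σ t m = G a r σ' t m := by
  have hs : ∀ j < m, sg σ j = sg σ' j := fun j hj => by rw [sg, sg, h j hj]
  unfold G
  congr 1
  · congr 1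
    · exact Finset.sum_congr rfl fun j hj => by rw [hs j (Finset.mem_range.mp hj)]
    · refine Finset.sum_congr rfl fun j hj => Finset.sum_congr rfl fun j' hj' => ?_
      rw [hs j (Finset.mem_range.mp hj), hs j' (Finset.mem_range.mp hj')]
  · congr 1
    exact Finset.sum_congr rfl fun j hj => by rw [hs j (Finset.mem_range.mp hj)]

lemma G_succ (a r : ℕ → ℝ) (σ : ℕ → Bool) (t : ℤ) (m : ℕ) :
    G a r σ t (m+1) = sg σ m * (a m - (t:ℝ) * r m)
      + G a r σ (t + (if σ m then 1 else -1)) m := by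
  have hcast : ((t + (if σ m then 1 else -1) : ℤ) : ℝ) = (t:ℝ) + sg σ m := by
    cases h : σ m <;> simp [sg, h] <;> push_cast <;> ring
  have h2 : ∑ j ∈ range (m+1), ∑ j' ∈ range (m+1),
      (if j < j' then sg σ j * sg σ j' * r j else 0)
      = (∑ j ∈ range m, ∑ j' ∈ range m, if j < j' then sg σ j * sg σ j' * r j else 0)
        + sg σ m * ∑ j ∈ range m, sg σ j * r j := by
    rw [Finset.sum_range_succ]
    have inner_m : ∑ j' ∈ range (m+1), (if m < j' then sg σ m * sg σ j' * r m else 0) = 0 := by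
      apply Finset.sum_eq_zero; intro j' hj'
      rw [Finset.mem_range] at hj'; rw [if_neg]; omega
    rw [inner_m, add_zero]
    have hcg : ∀ j ∈ range m, (∑ j' ∈ range (m+1), if j < j' then sg σ j * sg σ j' * r j else 0)
        = (∑ j' ∈ range m, if j < j' then sg σ j * sg σ j' * r j else 0)
          + sg σ j * sg σ m * r j := by
      intro j hj
      rw [Finset.sum_range_succ, if_pos (Finset.mem_range.mp hj)]
    rw [Finset.sum_congr rfl hcg, Finset.sum_add_distrib, Finset.mul_sum]
    congr 1
    exact Finset.sum_congr rfl fun j _ => by ring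
  unfold G
  rw [Finset.sum_range_succ, Finset.sum_range_succ (fun j => sg σ j * r j), h2, hcast]
  ring

structure Adm (a r : ℕ → ℝ) (θ : ℤ) : Prop where
  h0 : ∀ m, (θ:ℝ) * r m ≤ a m
  h1 : ∀ m, a m ≤ ((θ:ℝ)+1) * r m
  hr0 : ∀ m, 0 ≤ r m
  hrm : ∀ m, r m ≤ r (m+1)
  hd1 : ∀ m, a (m+1) - a m ≤ ((θ:ℝ)+1) * (r (m+1) - r m)
  hd2 : ∀ m, (θ:ℝ) * (r (m+1) - r m) ≤ a (m+1) - a m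
  hθ : 0 ≤ θ

lemma B_succ (a r : ℕ → ℝ) (θ : ℤ) (m : ℕ) (t : ℤ) :
    B a r θ (m+1) t = if t ≤ θ then a m - (t:ℝ) * r m + B a r θ m (t+1)
                else (t:ℝ) * r m - a m + B a r θ m (t-1) := rfl


lemma Adm.key {a r : ℕ → ℝ} {θ : ℤ} (H : Adm a r θ) : ∀ m : ℕ,
    (∀ t : ℤ, θ+1 ≤ t → B a r θ (m+1) (t+1) - B a r θ (m+1) (t-1)
        ≤ 2*(t:ℝ)*r m - 2*a m)
  ∧ (∀ t : ℤ, t ≤ θ → B a r θ (m+1) (t-1) - B a r θ (m+1) (t+1)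
        ≤ 2*a m - 2*(t:ℝ)*r m) := by
  intro m
  induction m with
  | zero =>
    constructor
    · intro t ht
      have htR : ((θ:ℝ)+1) ≤ (t:ℝ) := by exact_mod_cast ht
      rw [B_succ a r θ 0 (t+1), B_succ a r θ 0 (t-1), if_neg (by omega)]
      rcases eq_or_lt_of_le ht with heq | hlt
      · rw [if_pos (by omega)]
        simp only [B]
        push_cast
        linarith
      · rw [if_neg (by omega)]
        simp only [B]
        have h1 := H.h1 0
        have hr := H.hr0 0
        have hc : ((θ:ℝ)+1) ≤ (t:ℝ)-1 := by
          have : ((θ:ℤ)+2 : ℤ) ≤ t := by omega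
          have h2 : (((θ:ℤ)+2 : ℤ) : ℝ) ≤ (t:ℝ) := by exact_mod_cast this
          push_cast at h2; linarith
        push_cast
        nlinarith [mul_le_mul_of_nonneg_right hc hr]
    · intro t ht
      have htR : (t:ℝ) ≤ (θ:ℝ) := by exact_mod_cast ht
      rw [B_succ a r θ 0 (t+1), B_succ a r θ 0 (t-1), if_pos (by omega)]
      rcases eq_or_lt_of_le ht with heq | hlt
      · rw [if_neg (by omega)]
        simp only [B]
        push_cast
        linarith
      · rw [if_pos (by omega)]
        simp only [B]
        have h0 := H.h0 0
        have hr := H.hr0 0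
        have hc : ((t:ℝ)+1) ≤ (θ:ℝ) := by
          have : (t+1 : ℤ) ≤ θ := by omega
          have h2 : ((t+1 : ℤ) : ℝ) ≤ (θ:ℝ) := by exact_mod_cast this
          push_cast at h2; linarith
        push_cast
        nlinarith [mul_le_mul_of_nonneg_right hc hr]
  | succ m ih =>
    obtain ⟨ihP, ihQ⟩ := ih
    have hΔr : 0 ≤ r (m+1) - r m := by linarith [H.hrm m]
    constructor
    · intro t ht
      have htR : ((θ:ℝ)+1) ≤ (t:ℝ) := by exact_mod_cast ht
      rw [B_succ a r θ (m+1) (t+1), B_succ a r θ (m+1) (t-1), if_neg (by omega)]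
      have n1 : t + 1 - 1 = t := by omega
      rw [n1]
      rcases eq_or_lt_of_le ht with heq | hlt
      · rw [if_pos (by omega)]
        have n2 : t - 1 + 1 = t := by omega
        rw [n2]
        push_cast
        linarith
      · rw [if_neg (by omega)]
        have key := ihP (t-1) (by omega)
        have n2 : t - 1 + 1 = t := by omega
        have n3 : t - 1 - 1 = t - 2 := by omega
        rw [n2, n3] at key
        rw [n3]
        have hd1 := H.hd1 m
        have hc : ((θ:ℝ)+1) ≤ (t:ℝ)-1 := by
          have : ((θ:ℤ)+2 : ℤ) ≤ t := by omega
          have h2 : (((θ:ℤ)+2 : ℤ) : ℝ) ≤ (t:ℝ) := by exact_mod_cast this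
          push_cast at h2; linarith
        have hco : ((θ:ℝ)+1) * (r (m+1) - r m) ≤ ((t:ℝ)-1) * (r (m+1) - r m) :=
          mul_le_mul_of_nonneg_right hc hΔr
        push_cast at key ⊢
        nlinarith
    · intro t ht
      have htR : (t:ℝ) ≤ (θ:ℝ) := by exact_mod_cast ht
      rw [B_succ a r θ (m+1) (t+1), B_succ a r θ (m+1) (t-1), if_pos (by omega)]
      have n1 : t - 1 + 1 = t := by omega
      rw [n1]
      rcases eq_or_lt_of_le ht with heq | hlt
      · rw [if_neg (by omega)]
        have n2 : t + 1 - 1 = t := by omega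
        rw [n2]
        push_cast
        linarith
      · rw [if_pos (by omega)]
        have key := ihQ (t+1) (by omega)
        have n2 : t + 1 - 1 = t := by omega
        have n3 : t + 1 + 1 = t + 2 := by omega
        rw [n2, n3] at key
        rw [n3]
        have hd2 := H.hd2 m
        have hc : ((t:ℝ)+1) ≤ (θ:ℝ) := by
          have : (t+1 : ℤ) ≤ θ := by omega
          have h2 : ((t+1 : ℤ) : ℝ) ≤ (θ:ℝ) := by exact_mod_cast this
          push_cast at h2; linarith
        have hco : ((t:ℝ)+1) * (r (m+1) - r m) ≤ (θ:ℝ) * (r (m+1) - r m) :=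
          mul_le_mul_of_nonneg_right hc hΔr
        push_cast at key ⊢
        nlinarith

lemma Adm.bellman {a r : ℕ → ℝ} {θ : ℤ} (H : Adm a r θ) (m : ℕ) (t : ℤ) :
    (a m - (t:ℝ) * r m + B a r θ m (t+1) ≤ B a r θ (m+1) t)
    ∧ ((t:ℝ) * r m - a m + B a r θ m (t-1) ≤ B a r θ (m+1) t) := by
  rcases le_or_gt t θ with hc | hc
  · rw [B_succ a r θ m t, if_pos hc]
    have htR : (t:ℝ) ≤ (θ:ℝ) := by exact_mod_cast hc
    constructor
    · exact le_refl _
    · -- need B m (t-1) - B m (t+1) ≤ 2 a m - 2 t r m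
      cases m with
      | zero =>
        simp only [B]
        have h0 := H.h0 0
        have hr := H.hr0 0
        have hθR : (0:ℝ) ≤ (θ:ℝ) := by exact_mod_cast H.hθ
        nlinarith [mul_le_mul_of_nonneg_right htR hr]
      | succ m' =>
        have key := (H.key m').2 t hc
        have hΔr : 0 ≤ r (m'+1) - r m' := by linarith [H.hrm m']
        have hd2 := H.hd2 m'
        have hco : (t:ℝ) * (r (m'+1) - r m') ≤ (θ:ℝ) * (r (m'+1) - r m') :=
          mul_le_mul_of_nonneg_right htR hΔr
        nlinarith
  · rw [B_succ a r θ m t, if_neg (by omega)]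
    have htR : ((θ:ℝ)+1) ≤ (t:ℝ) := by
      have : ((θ+1 : ℤ) : ℝ) ≤ (t:ℝ) := by exact_mod_cast hc
      push_cast at this; linarith
    constructor
    · -- need B m (t+1) - B m (t-1) ≤ 2 t r m - 2 a m
      cases m with
      | zero =>
        simp only [B]
        have h1 := H.h1 0
        have hr := H.hr0 0
        nlinarith [mul_le_mul_of_nonneg_right htR hr]
      | succ m' =>
        have key := (H.key m').1 t (by omega)
        have hΔr : 0 ≤ r (m'+1) - r m' := by linarith [H.hrm m']
        have hd1 := H.hd1 m'
        have hco : ((θ:ℝ)+1) * (r (m'+1) - r m') ≤ (t:ℝ) * (r (m'+1) - r m') :=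
          mul_le_mul_of_nonneg_right htR hΔr
        nlinarith
    · exact le_refl _

lemma G_succ_true (a r : ℕ → ℝ) (σ : ℕ → Bool) (t : ℤ) (m : ℕ) (hσ : σ m = true) :
    G a r σ t (m+1) = (a m - (t:ℝ) * r m) + G a r σ (t+1) m := by
  rw [G_succ, hσ]
  have : sg σ m = 1 := by simp [sg, hσ]
  rw [this]
  norm_num

lemma G_succ_false (a r : ℕ → ℝ) (σ : ℕ → Bool) (t : ℤ) (m : ℕ) (hσ : σ m = false) :
    G a r σ t (m+1) = -(a m - (t:ℝ) * r m) + G a r σ (t-1) m := by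
  rw [G_succ, hσ]
  have : sg σ m = -1 := by simp [sg, hσ]
  rw [this]
  have e : t + (if (false : Bool) then (1:ℤ) else -1) = t - 1 := by simp [sub_eq_add_neg]
  rw [e]
  ring

lemma Adm.upper {a r : ℕ → ℝ} {θ : ℤ} (H : Adm a r θ) (m : ℕ) :
    ∀ (t : ℤ) (σ : ℕ → Bool), G a r σ t m ≤ B a r θ m t := by
  induction m with
  | zero => intro t σ; rw [G_zero]; simp [B]
  | succ m ih =>
    intro t σ
    cases hσ : σ m with
    | true =>
      rw [G_succ_true a r σ t m hσ]
      have h1 := ih (t+1) σ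
      have h2 := (H.bellman m t).1
      linarith
    | false =>
      rw [G_succ_false a r σ t m hσ]
      have h1 := ih (t-1) σ
      have h2 := (H.bellman m t).2
      linarith

lemma exists_opt (a r : ℕ → ℝ) (θ : ℤ) (m : ℕ) :
    ∀ t : ℤ, ∃ σ : ℕ → Bool, G a r σ t m = B a r θ m t := by
  induction m with
  | zero => intro t; exact ⟨fun _ => true, by rw [G_zero]; simp [B]⟩
  | succ m ih =>
    intro t
    rcases le_or_gt t θ with hc | hc
    · obtain ⟨σ0, h0⟩ := ih (t+1)
      refine ⟨Function.update σ0 m true, ?_⟩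
      have hm : Function.update σ0 m true m = true := Function.update_self m true σ0
      have hcg : G a r (Function.update σ0 m true) (t+1) m = G a r σ0 (t+1) m :=
        G_congr a r (Function.update σ0 m true) σ0 (t+1) m
          (fun j hj => Function.update_of_ne (Nat.ne_of_lt hj) true σ0)
      rw [G_succ_true a r _ t m hm, hcg, h0, B_succ a r θ m t, if_pos hc]
    · obtain ⟨σ0, h0⟩ := ih (t-1)
      refine ⟨Function.update σ0 m false, ?_⟩
      have hm : Function.update σ0 m false m = false := Function.update_self m false σ0
      have hcg : G a r (Function.update σ0 m false) (t-1) m = G a r σ0 (t-1) m :=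
        G_congr a r (Function.update σ0 m false) σ0 (t-1) m
          (fun j hj => Function.update_of_ne (Nat.ne_of_lt hj) false σ0)
      rw [G_succ_false a r _ t m hm, hcg, h0, B_succ a r θ m t, if_neg (by omega)]
      ring
/-- Maximum over all sign choices `(σ_1,...,σ_N) ∈ {−1,1}^N` of
`Σ_j σ_j a_j − Σ_{j<j'} σ_j σ_{j'} r_j`. -/
noncomputable def sigMax (N : ℕ) (a r : Fin N → ℝ) : ℝ :=
  Finset.univ.sup' Finset.univ_nonempty fun σ : Fin N → Bool =>
    (∑ j, (if σ j then (1 : ℝ) else -1) * a j) -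
      ∑ j, ∑ j', if j < j' then
        (if σ j then (1 : ℝ) else -1) * (if σ j' then (1 : ℝ) else -1) * r j else 0

lemma body_eq_G (N : ℕ) (a r : Fin N → ℝ) (a' r' : ℕ → ℝ)
    (ha : ∀ j : Fin N, a' j = a j) (hr : ∀ j : Fin N, r' j = r j)
    (σ : Fin N → Bool) (σ' : ℕ → Bool) (hσ : ∀ j : Fin N, σ' j = σ j) :
    ((∑ j, (if σ j then (1 : ℝ) else -1) * a j) -
      ∑ j, ∑ j', if j < j' then
        (if σ j then (1 : ℝ) else -1) * (if σ j' then (1 : ℝ) else -1) * r j else 0)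
    = G a' r' σ' 0 N := by
  have hsg : ∀ j : Fin N, sg σ' j = (if σ j then (1:ℝ) else -1) := by
    intro j; rw [sg, hσ j]
  unfold G
  rw [Int.cast_zero, zero_mul, sub_zero]
  have h1 : ∑ j : Fin N, (if σ j then (1:ℝ) else -1) * a j
      = ∑ jn ∈ range N, sg σ' jn * a' jn := by
    rw [← Fin.sum_univ_eq_sum_range (fun jn => sg σ' jn * a' jn) N]
    exact Finset.sum_congr rfl fun j _ => by rw [hsg j, ha j]
  have h2 : (∑ j : Fin N, ∑ j' : Fin N, if j < j' then
        (if σ j then (1 : ℝ) else -1) * (if σ j' then (1 : ℝ) else -1) * r j else 0)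
      = ∑ jn ∈ range N, ∑ j'n ∈ range N,
          if jn < j'n then sg σ' jn * sg σ' j'n * r' jn else 0 := by
    rw [← Fin.sum_univ_eq_sum_range
      (fun jn => ∑ j'n ∈ range N, if jn < j'n then sg σ' jn * sg σ' j'n * r' jn else 0) N]
    refine Finset.sum_congr rfl fun j _ => ?_
    rw [← Fin.sum_univ_eq_sum_range
      (fun j'n => if (j:ℕ) < j'n then sg σ' j * sg σ' j'n * r' j else 0) N]
    refine Finset.sum_congr rfl fun j' _ => ?_
    rw [hsg j, hsg j', hr j]
    congr 1
  rw [h1, h2]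

lemma sigMax_eq_B (N : ℕ) (a r : Fin N → ℝ) (a' r' : ℕ → ℝ) (θ : ℤ)
    (ha : ∀ j : Fin N, a' j = a j) (hr : ∀ j : Fin N, r' j = r j)
    (H : Adm a' r' θ) :
    sigMax N a r = B a' r' θ N 0 := by
  unfold sigMax
  apply le_antisymm
  · apply Finset.sup'_le
    intro σ _
    have hσ : ∀ j : Fin N, (fun jn => if h : jn < N then σ ⟨jn, h⟩ else false) (j : ℕ) = σ j := by
      intro j; simp [j.isLt]
    rw [body_eq_G N a r a' r' ha hr σ (fun jn => if h : jn < N then σ ⟨jn, h⟩ else false) hσ]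
    exact H.upper N 0 _
  · obtain ⟨σ', h0⟩ := exists_opt a' r' θ N 0
    have hb := body_eq_G N a r a' r' ha hr (fun j => σ' j) σ' (fun j => rfl)
    have hle := Finset.le_sup' (fun σ : Fin N → Bool =>
      (∑ j, (if σ j then (1 : ℝ) else -1) * a j) -
      ∑ j, ∑ j', if j < j' then
        (if σ j then (1 : ℝ) else -1) * (if σ j' then (1 : ℝ) else -1) * r j else 0)
      (Finset.mem_univ (fun j : Fin N => σ' (j : ℕ)))
    rw [← h0, ← hb]
    exact hle
lemma T3 (A1 A3 Rf Qv : ℕ → ℝ)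
    (h31 : ∀ m, A3 m - Rf m = Qv m) (h11 : ∀ m, Rf m - A1 m = Qv m)
    (h32 : ∀ m, 2 * Rf m - A3 m = A1 m) :
    ∀ m, B A3 Rf 1 m 1 = B A1 Rf 0 m 1 ∧ B A3 Rf 1 m 2 = B A1 Rf 0 m 0 := by
  intro m
  induction m with
  | zero => simp [B]
  | succ m ih =>
    constructor
    · rw [B_succ A3 Rf 1 m 1, if_pos (by omega), B_succ A1 Rf 0 m 1, if_neg (by omega)]
      have e1 : (1:ℤ) + 1 = 2 := by omega
      have e2 : (1:ℤ) - 1 = 0 := by omega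
      rw [e1, e2, ih.2]
      have := h31 m; have := h11 m
      push_cast
      linarith
    · rw [B_succ A3 Rf 1 m 2, if_neg (by omega), B_succ A1 Rf 0 m 0, if_pos (by omega)]
      have e1 : (2:ℤ) - 1 = 1 := by omega
      have e2 : (0:ℤ) + 1 = 1 := by omega
      rw [e1, e2, ih.1]
      have := h32 m
      push_cast
      linarith

lemma Tdelta (A1 A2 Rf c : ℕ → ℝ)
    (h12 : ∀ m, A1 m - A2 m = 2 * c m) (hc0 : ∀ m, 0 ≤ c m)
    (hcm : ∀ m, c m ≤ c (m+1)) :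
    ∀ m, (0 ≤ B A1 Rf 0 m 0 - B A2 Rf 0 m 0)
      ∧ (B A1 Rf 0 m 0 - B A2 Rf 0 m 0 ≤ 2 * c m)
      ∧ (B A1 Rf 0 m 1 - B A2 Rf 0 m 1 ≤ 0)
      ∧ (-(2 * c m) ≤ B A1 Rf 0 m 1 - B A2 Rf 0 m 1) := by
  intro m
  induction m with
  | zero =>
    simp [B]
    exact hc0 0
  | succ m ih =>
    obtain ⟨i1, i2, i3, i4⟩ := ih
    have h := h12 m
    have hc := hcm m
    have hc0' := hc0 m
    have e1 : (0:ℤ) + 1 = 1 := by omega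
    have e2 : (1:ℤ) - 1 = 0 := by omega
    have b10 : B A1 Rf 0 (m+1) 0 = A1 m + B A1 Rf 0 m 1 := by
      rw [B_succ A1 Rf 0 m 0, if_pos (by omega), e1]; push_cast; ring
    have b20 : B A2 Rf 0 (m+1) 0 = A2 m + B A2 Rf 0 m 1 := by
      rw [B_succ A2 Rf 0 m 0, if_pos (by omega), e1]; push_cast; ring
    have b11 : B A1 Rf 0 (m+1) 1 = Rf m - A1 m + B A1 Rf 0 m 0 := by
      rw [B_succ A1 Rf 0 m 1, if_neg (by omega), e2]; push_cast; ring
    have b21 : B A2 Rf 0 (m+1) 1 = Rf m - A2 m + B A2 Rf 0 m 0 := by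
      rw [B_succ A2 Rf 0 m 1, if_neg (by omega), e2]; push_cast; ring
    refine ⟨?_, ?_, ?_, ?_⟩ <;> simp only [b10, b20, b11, b21] <;> linarith
theorem key_identity_ukdv (N' : ℕ) (hN' : 1 ≤ N') (p : Fin N' → ℝ)
    (L k l : ℝ) (hp0 : ∀ j, 0 ≤ p j) (hpmono : Monotone p)
    (hL : 0 ≤ L) (hk : 2 ≤ k) (hl : 0 ≤ l)
    (q r : Fin N' → ℝ)
    (hq : ∀ j, q j = min (p j) L)
    (hr : ∀ j, r j = k * p j + l * q j) :
    sigMax N' (fun j => k * p j + (l - 1) * q j) r =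
      max (sigMax N' (fun j => (k - 2) * p j + (l + 1) * q j) r)
          (sigMax N' (fun j => k * p j + (l + 1) * q j) r - 2 * L) := by
  obtain ⟨n, rfl⟩ : ∃ n, N' = n + 1 := ⟨N' - 1, by omega⟩
  set P : ℕ → ℝ := fun m => p ⟨min m n, by omega⟩ with hPdef
  set Q : ℕ → ℝ := fun m => min (P m) L with hQdef
  set Rf : ℕ → ℝ := fun m => k * P m + l * Q m with hRdef
  set A1f : ℕ → ℝ := fun m => k * P m + (l - 1) * Q m with hA1def
  set A2f : ℕ → ℝ := fun m => (k - 2) * P m + (l + 1) * Q m with hA2def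
  set A3f : ℕ → ℝ := fun m => k * P m + (l + 1) * Q m with hA3def
  have hP0 : ∀ m, 0 ≤ P m := fun m => hp0 _
  have hPm : ∀ m, P m ≤ P (m+1) := by
    intro m
    apply hpmono
    simp only [Fin.mk_le_mk]
    omega
  have hQ0 : ∀ m, 0 ≤ Q m := fun m => le_min (hP0 m) hL
  have hQP : ∀ m, Q m ≤ P m := fun m => min_le_left _ _
  have hQm : ∀ m, Q m ≤ Q (m+1) := fun m => min_le_min (hPm m) (le_refl L)
  have hQlip : ∀ m, Q (m+1) - Q m ≤ P (m+1) - P m := by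
    intro m
    rcases le_total (P m) L with h | h
    · have h1 : Q m = P m := min_eq_left h
      have h2 : Q (m+1) ≤ P (m+1) := min_le_left _ _
      linarith
    · have h1 : Q m = L := min_eq_right h
      have h2 : Q (m+1) ≤ L := min_le_right _ _
      linarith [hPm m]
  have hkP : ∀ m, 2 * P m ≤ k * P m := fun m =>
    mul_le_mul_of_nonneg_right hk (hP0 m)
  have hlQ : ∀ m, 0 ≤ l * Q m := fun m => mul_nonneg hl (hQ0 m)
  have hk2P : ∀ m, 0 ≤ (k - 2) * P m := fun m =>
    mul_nonneg (by linarith) (hP0 m)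
  have hkD : ∀ m, 2 * (P (m+1) - P m) ≤ k * (P (m+1) - P m) := fun m =>
    mul_le_mul_of_nonneg_right hk (by linarith [hPm m])
  have hlD : ∀ m, 0 ≤ l * (Q (m+1) - Q m) := fun m =>
    mul_nonneg hl (by linarith [hQm m])
  have hk2D : ∀ m, 0 ≤ (k - 2) * (P (m+1) - P m) := fun m =>
    mul_nonneg (by linarith) (by linarith [hPm m])
  have H1 : Adm A1f Rf 0 := by
    refine ⟨?_, ?_, ?_, ?_, ?_, ?_, by norm_num⟩ <;> intro m <;> push_cast <;>
      simp only [hA1def, hRdef]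
    · linarith [hkP m, hlQ m, hQP m, hP0 m]
    · linarith [hQ0 m]
    · linarith [hkP m, hlQ m, hP0 m]
    · linarith [hkD m, hlD m, hPm m]
    · linarith [hQm m]
    · linarith [hkD m, hlD m, hQlip m, hPm m]
  have H2 : Adm A2f Rf 0 := by
    refine ⟨?_, ?_, ?_, ?_, ?_, ?_, by norm_num⟩ <;> intro m <;> push_cast <;>
      simp only [hA2def, hRdef]
    · linarith [hk2P m, hlQ m, hQ0 m]
    · linarith [hQP m, hP0 m]
    · linarith [hkP m, hlQ m, hP0 m]
    · linarith [hkD m, hlD m, hPm m]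
    · linarith [hQlip m, hPm m]
    · linarith [hk2D m, hlD m, hQm m]
  have H3 : Adm A3f Rf 1 := by
    refine ⟨?_, ?_, ?_, ?_, ?_, ?_, by norm_num⟩ <;> intro m <;> push_cast <;>
      simp only [hA3def, hRdef]
    · linarith [hQ0 m]
    · linarith [hkP m, hQP m, hP0 m, hlQ m]
    · linarith [hkP m, hlQ m, hP0 m]
    · linarith [hkD m, hlD m, hPm m]
    · linarith [hkD m, hQlip m, hPm m, hlD m]
    · linarith [hQm m]
  have hPj : ∀ j : Fin (n+1), P (j : ℕ) = p j := by
    intro j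
    simp only [hPdef]
    congr 1
    exact Fin.ext (by have := j.isLt; simp; omega)
  have hQj : ∀ j : Fin (n+1), Q (j : ℕ) = q j := by
    intro j; simp only [hQdef]; rw [hPj j, ← hq j]
  have hRj : ∀ j : Fin (n+1), Rf (j : ℕ) = r j := by
    intro j; simp only [hRdef]; rw [hPj j, hQj j, ← hr j]
  have E1 : sigMax (n+1) (fun j => k * p j + (l - 1) * q j) r = B A1f Rf 0 (n+1) 0 := by
    apply sigMax_eq_B _ _ _ _ _ 0 _ hRj H1
    intro j; simp only [hA1def]; rw [hPj j, hQj j]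
  have E2 : sigMax (n+1) (fun j => (k - 2) * p j + (l + 1) * q j) r = B A2f Rf 0 (n+1) 0 := by
    apply sigMax_eq_B _ _ _ _ _ 0 _ hRj H2
    intro j; simp only [hA2def]; rw [hPj j, hQj j]
  have E3 : sigMax (n+1) (fun j => k * p j + (l + 1) * q j) r = B A3f Rf 1 (n+1) 0 := by
    apply sigMax_eq_B _ _ _ _ _ 1 _ hRj H3
    intro j; simp only [hA3def]; rw [hPj j, hQj j]
  rw [E1, E2, E3]
  have e1 : (0:ℤ) + 1 = 1 := by omega
  have bA1 : B A1f Rf 0 (n+1) 0 = A1f n + B A1f Rf 0 n 1 := by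
    rw [B_succ A1f Rf 0 n 0, if_pos (by omega), e1]; push_cast; ring
  have bA2 : B A2f Rf 0 (n+1) 0 = A2f n + B A2f Rf 0 n 1 := by
    rw [B_succ A2f Rf 0 n 0, if_pos (by omega), e1]; push_cast; ring
  have bA3 : B A3f Rf 1 (n+1) 0 = A3f n + B A3f Rf 1 n 1 := by
    rw [B_succ A3f Rf 1 n 0, if_pos (by omega), e1]; push_cast; ring
  have t3 : B A3f Rf 1 n 1 = B A1f Rf 0 n 1 := by
    refine (T3 A1f A3f Rf Q ?_ ?_ ?_ n).1 <;> intro m <;>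
      simp only [hA1def, hA3def, hRdef] <;> ring
  have td := Tdelta A1f A2f Rf (fun m => P m - Q m)
    (by intro m; simp only [hA1def, hA2def]; ring)
    (fun m => by linarith [hQP m])
    (fun m => by linarith [hQlip m]) (n+1)
  have hPtop : P (n+1) = P n := by
    simp only [hPdef]
    congr 1
    exact Fin.ext (by simp)
  have hQtop : Q (n+1) = Q n := by simp only [hQdef, hPtop]
  have f3 : B A3f Rf 1 (n+1) 0 = B A1f Rf 0 (n+1) 0 + 2 * Q n := by
    rw [bA3, bA1, t3]
    have : A3f n - A1f n = 2 * Q n := by simp only [hA1def, hA3def]; ring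
    linarith
  obtain ⟨f1, f2, -, -⟩ := td
  simp only [hPtop, hQtop] at f2
  have hQnL : Q n ≤ L := min_le_right _ _
  rcases le_total (P n) L with h | h
  · have hQn : Q n = P n := min_eq_left h
    rw [max_eq_left (by linarith)]
    linarith
  · have hQn : Q n = L := min_eq_right h
    rw [max_eq_right (by linarith)]
    linarith
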